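/- In the setting of the previous theorem, there exist a compact set Ω ⊂ ℂ, real numbers m_r and positive constants K_r (r = 1,…,n) such that every zero of F outside Ω lies in one of the n logarithmic strips {k : |−Im k + m_r log|k|| ≤ K_r}. -/

import Mathlib

open Filter Finset

namespace Stmt15Aux

variable {N : ℕ}

/-- The linear function `t ↦ ν r - t * σ r`. -/
def lin (σ ν : Fin (N + 1) → ℝ) (r : Fin (N + 1)) (t : ℝ) : ℝ := ν r - t * σ r

lemma lin_continuous (σ ν : Fin (N + 1) → ℝ) (r : Fin (N + 1)) :
    Continuous (lin σ ν r) :=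
  continuous_const.sub (continuous_id.mul continuous_const)

/-- `t` is a breakpoint: two distinct indices attain the maximum. -/
def IsBkpt (σ ν : Fin (N + 1) → ℝ) (t : ℝ) : Prop :=
  ∃ r s : Fin (N + 1), r ≠ s ∧ (∀ q, lin σ ν q t ≤ lin σ ν r t) ∧
    lin σ ν s t = lin σ ν r t

lemma exists_bkpt_aux (σ ν : Fin (N + 1) → ℝ) {t u : ℝ} (htu : t < u)
    {r s : Fin (N + 1)} (hrs : s ≠ r)
    (hr : ∀ q, lin σ ν q t ≤ lin σ ν r t) (hcross : lin σ ν s u = lin σ ν r u) :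
    ∃ b, IsBkpt σ ν b ∧ t ≤ b ∧ b ≤ u := by
  set S : Set ℝ := Set.Icc t u ∩ {w | ∀ q, lin σ ν q w ≤ lin σ ν r w} with hS
  have hSclosed : IsClosed S := by
    apply IsClosed.inter isClosed_Icc
    have : {w | ∀ q, lin σ ν q w ≤ lin σ ν r w} =
        ⋂ q, {w | lin σ ν q w ≤ lin σ ν r w} := by
      ext w; simp
    rw [this]
    exact isClosed_iInter fun q =>
      isClosed_le (lin_continuous σ ν q) (lin_continuous σ ν r)
  have htS : t ∈ S := ⟨⟨le_refl t, le_of_lt htu⟩, hr⟩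
  have hbdd : BddAbove S := BddAbove.mono Set.inter_subset_left bddAbove_Icc
  set b := sSup S with hb
  have hbS : b ∈ S := hSclosed.csSup_mem ⟨t, htS⟩ hbdd
  obtain ⟨⟨htb, hbu⟩, hbmax⟩ := hbS
  rcases eq_or_lt_of_le hbu with hbeq | hblt
  · exact ⟨b, ⟨r, s, hrs.symm, hbmax, by rw [hbeq]; exact hcross⟩, htb, hbu⟩
  · -- find a second maximizer at b
    by_contra hno
    push_neg at hno
    have hno' : ∀ s' : Fin (N + 1), s' ≠ r → lin σ ν s' b < lin σ ν r b := by
      intro s' hs'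
      rcases lt_or_eq_of_le (hbmax s') with h | h
      · exact h
      · exact absurd (hno b ⟨r, s', hs'.symm, hbmax, h⟩ htb) (not_lt.mpr hbu)
    have hev : ∀ᶠ w in nhds b, ∀ q : Fin (N + 1), q ≠ r → lin σ ν q w < lin σ ν r w := by
      rw [Filter.eventually_all]
      intro q
      by_cases hq : q = r
      · filter_upwards with w hw; exact absurd hq hw
      · filter_upwards [((lin_continuous σ ν q).continuousAt).eventually_lt
          ((lin_continuous σ ν r).continuousAt) (hno' q hq)] with w hw _
        exact hw
    rw [Metric.eventually_nhds_iff] at hev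
    obtain ⟨ε, hε, hεw⟩ := hev
    set w := min (b + ε / 2) ((b + u) / 2) with hw
    have hwb : b < w := by
      apply lt_min <;> linarith
    have hwu : w ≤ u := le_trans (min_le_right _ _) (by linarith)
    have hwd : dist w b < ε := by
      rw [Real.dist_eq, abs_of_pos (by linarith)]
      calc w - b ≤ (b + ε / 2) - b := by
            have := min_le_left (b + ε / 2) ((b + u) / 2); linarith
        _ < ε := by linarith
    have hwS : w ∈ S := by
      refine ⟨⟨by linarith, hwu⟩, fun q => ?_⟩
      by_cases hq : q = r
      · rw [hq]
      · exact le_of_lt (hεw hwd q hq)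
    have : w ≤ b := le_csSup hbdd hwS
    linarith

lemma exists_bkpt_aux' (σ ν : Fin (N + 1) → ℝ) {t u : ℝ} (hut : u < t)
    {r s : Fin (N + 1)} (hrs : s ≠ r)
    (hr : ∀ q, lin σ ν q t ≤ lin σ ν r t) (hcross : lin σ ν s u = lin σ ν r u) :
    ∃ b, IsBkpt σ ν b ∧ u ≤ b ∧ b ≤ t := by
  have key : ∀ (q : Fin (N + 1)) (w : ℝ),
      lin (fun i => -σ i) ν q w = lin σ ν q (-w) := by
    intro q w; simp only [lin]; ring
  obtain ⟨b, ⟨r', s', hrs', hmax', heq'⟩, h1, h2⟩ :=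
    exists_bkpt_aux (fun i => -σ i) ν (t := -t) (u := -u) (by linarith) hrs
      (fun q => by rw [key, key, neg_neg]; exact hr q)
      (by rw [key, key, neg_neg]; exact hcross)
  refine ⟨-b, ⟨r', s', hrs', fun q => ?_, ?_⟩, by linarith, by linarith⟩
  · rw [← key, ← key]; exact hmax' q
  · rw [← key, ← key]; exact heq'

lemma bkpt_finite (σ ν : Fin (N + 1) → ℝ) (hσ : Function.Injective σ) :
    {t | IsBkpt σ ν t}.Finite := by
  apply Set.Finite.subset
    (Set.finite_range (fun p : Fin (N + 1) × Fin (N + 1) =>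
      (ν p.1 - ν p.2) / (σ p.1 - σ p.2)))
  rintro t ⟨r, s, hrs, hmax, heq⟩
  refine ⟨(r, s), ?_⟩
  have hσne : σ r - σ s ≠ 0 := sub_ne_zero.mpr (fun h => hrs (hσ h))
  simp only [lin] at heq
  field_simp
  linarith [heq]

lemma margin (σ ν : Fin (N + 1) → ℝ) (hσ : Function.Injective σ)
    {δ : ℝ} (hδ0 : 0 < δ)
    (hδ : ∀ p q : Fin (N + 1), p ≠ q → δ ≤ |σ p - σ q|)
    {B : Finset ℝ} (hB : ∀ b, IsBkpt σ ν b → b ∈ B)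
    {c t : ℝ} (hc : ∀ b ∈ B, c ≤ |t - b|)
    {r : Fin (N + 1)} (hr : ∀ q, lin σ ν q t ≤ lin σ ν r t)
    {s : Fin (N + 1)} (hs : s ≠ r) :
    δ * c ≤ lin σ ν r t - lin σ ν s t := by
  by_cases heq : lin σ ν s t = lin σ ν r t
  · have htB : t ∈ B := hB t ⟨r, s, hs.symm, hr, heq⟩
    have := hc t htB
    simp only [sub_self, abs_zero] at this
    nlinarith
  have hlt : lin σ ν s t < lin σ ν r t := lt_of_le_of_ne (hr s) heq
  have hσne : σ r - σ s ≠ 0 := sub_ne_zero.mpr (fun h => hs (hσ h).symm)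
  set u := (ν r - ν s) / (σ r - σ s) with hu
  have hid : ∀ w, lin σ ν r w - lin σ ν s w = (σ r - σ s) * (u - w) := by
    intro w
    simp only [lin, hu]
    field_simp
    ring
  have hcross : lin σ ν s u = lin σ ν r u := by
    have := hid u
    simp only [sub_self, mul_zero] at this
    linarith
  have htu : t ≠ u := by
    intro h
    rw [h] at hlt
    linarith [hcross]
  have hδrs : δ ≤ |σ r - σ s| := hδ r s (Ne.symm hs)
  have key : ∃ b ∈ B, |t - b| ≤ |u - t| := by
    rcases lt_or_gt_of_ne htu with h | h
    · obtain ⟨b, hbk, h1, h2⟩ := exists_bkpt_aux σ ν h hs hr hcross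
      exact ⟨b, hB b hbk, by rw [abs_of_nonpos (by linarith), abs_of_pos (by linarith)]; linarith⟩
    · obtain ⟨b, hbk, h1, h2⟩ := exists_bkpt_aux' σ ν h hs hr hcross
      exact ⟨b, hB b hbk, by rw [abs_of_nonneg (by linarith), abs_of_neg (by linarith)]; linarith⟩
  obtain ⟨b, hbB, hbd⟩ := key
  have hcb : c ≤ |t - b| := hc b hbB
  have heqabs : lin σ ν r t - lin σ ν s t = |σ r - σ s| * |u - t| := by
    rw [← abs_mul, ← hid t, abs_of_pos (by linarith)]
  rw [heqabs]
  calc δ * c ≤ δ * |u - t| := by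
        apply mul_le_mul_of_nonneg_left (le_trans hcb hbd) (le_of_lt hδ0)
    _ ≤ |σ r - σ s| * |u - t| := by
        apply mul_le_mul_of_nonneg_right hδrs (abs_nonneg _)

lemma bset_card_le (σ ν : Fin (N + 1) → ℝ) (hσ : StrictMono σ) :
    ((bkpt_finite σ ν hσ.injective).toFinset).card ≤ N := by
  classical
  set B := (bkpt_finite σ ν hσ.injective).toFinset with hBdef
  have hmemB : ∀ t, t ∈ B ↔ IsBkpt σ ν t := by
    intro t; simp [hBdef, Set.Finite.mem_toFinset]
  set M : ℝ → Finset (Fin (N + 1)) :=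
    fun t => univ.filter (fun q => ∀ p, lin σ ν p t ≤ lin σ ν q t) with hM
  have hMne : ∀ t ∈ B, (M t).Nonempty := by
    intro t ht
    obtain ⟨r, s, hrs, hr, heq⟩ := (hmemB t).mp ht
    exact ⟨r, by simp [hM, hr]⟩
  have hMmem : ∀ t (ht : t ∈ B), ∀ q ∈ M t, ∀ p, lin σ ν p t ≤ lin σ ν q t := by
    intro t ht q hq
    simp only [hM, mem_filter] at hq
    exact hq.2
  -- order lemma
  have horder : ∀ t₁ t₂ : ℝ, t₁ < t₂ → ∀ q₁ q₂ : Fin (N + 1),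
      (∀ p, lin σ ν p t₁ ≤ lin σ ν q₁ t₁) → (∀ p, lin σ ν p t₂ ≤ lin σ ν q₂ t₂) →
      q₂ ≤ q₁ := by
    intro t₁ t₂ ht q₁ q₂ h1 h2
    by_contra hq
    push_neg at hq
    have hσlt : σ q₁ < σ q₂ := hσ hq
    have e1 := h1 q₂
    have e2 := h2 q₁
    simp only [lin] at e1 e2
    nlinarith
  set φ : ℝ → Fin (N + 1) := fun t =>
    if h : t ∈ B then (M t).min' (hMne t h) else 0 with hφ
  have hφmem : ∀ t (ht : t ∈ B), φ t ∈ M t := by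
    intro t ht; simp only [hφ, dif_pos ht]; exact (M t).min'_mem _
  have hφmax : ∀ t (ht : t ∈ B), ∀ p, lin σ ν p t ≤ lin σ ν (φ t) t := by
    intro t ht
    exact hMmem t ht _ (hφmem t ht)
  have htwo : ∀ t (ht : t ∈ B), ∃ s ∈ M t, φ t < s := by
    intro t ht
    obtain ⟨r, s, hrs, hr, heq⟩ := (hmemB t).mp ht
    have hrM : r ∈ M t := by simp [hM, hr]
    have hsM : s ∈ M t := by
      simp only [hM, mem_filter, mem_univ, true_and]
      intro p; rw [heq]; exact hr p
    have hle : φ t ≤ min r s := by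
      simp only [hφ, dif_pos ht, le_min_iff]
      exact ⟨Finset.min'_le _ _ hrM, Finset.min'_le _ _ hsM⟩
    refine ⟨max r s, ?_, lt_of_le_of_lt hle (min_lt_max.mpr hrs)⟩
    rcases le_total r s with h | h
    · rw [max_eq_right h]; exact hsM
    · rw [max_eq_left h]; exact hrM
  have hanti : ∀ t₁ ∈ B, ∀ t₂ ∈ B, t₁ < t₂ → φ t₂ < φ t₁ := by
    intro t₁ h₁ t₂ h₂ ht
    obtain ⟨s₂, hs₂M, hs₂⟩ := htwo t₂ h₂
    exact lt_of_lt_of_le hs₂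
      (horder t₁ t₂ ht (φ t₁) s₂ (hφmax t₁ h₁) (hMmem t₂ h₂ s₂ hs₂M))
  have hne : ∀ t ∈ B, φ t ≠ Fin.last N := by
    intro t ht hlast
    obtain ⟨s₂, _, hs₂⟩ := htwo t ht
    rw [hlast] at hs₂
    exact absurd (Fin.le_last s₂) (not_le.mpr hs₂)
  have hmaps : ∀ t ∈ B, φ t ∈ (univ : Finset (Fin (N + 1))).erase (Fin.last N) := by
    intro t ht
    exact Finset.mem_erase.mpr ⟨hne t ht, mem_univ _⟩
  have hinj : Set.InjOn φ ↑B := by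
    intro t₁ h₁ t₂ h₂ heq
    by_contra hne'
    rcases lt_or_gt_of_ne hne' with h | h
    · exact absurd heq (ne_of_gt (hanti t₁ h₁ t₂ h₂ h))
    · exact absurd heq (ne_of_lt (hanti t₂ h₂ t₁ h₁ h))
  calc B.card ≤ ((univ : Finset (Fin (N + 1))).erase (Fin.last N)).card :=
        Finset.card_le_card_of_injOn φ hmaps hinj
    _ = N := by rw [Finset.card_erase_of_mem (mem_univ _), Finset.card_univ,
        Fintype.card_fin]; rfl

end Stmt15Aux

open Complex Filter Finset

set_option maxHeartbeats 1600000 in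
/-- All zeros of `F(k) = Σ_r k^{ν_r} a_r(k) e^{ikσ_r}` (with `a_r` rational,
`a_r(k) → α_r ≠ 0`) outside some compact set lie in one of `n` logarithmic strips
`{k : |−Im k + m_r log|k|| ≤ K_r}`. -/
theorem stmt15 (n : ℕ) (hn : 1 ≤ n) (σ : Fin (n + 1) → ℝ) (hσ : StrictMono σ)
    (ν : Fin (n + 1) → ℝ) (α : Fin (n + 1) → ℂ) (hα : ∀ r, α r ≠ 0)
    (a : Fin (n + 1) → ℂ → ℂ)
    (hrat : ∀ r, ∃ p q : Polynomial ℂ, q ≠ 0 ∧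
      ∀ k : ℂ, q.eval k ≠ 0 → a r k = p.eval k / q.eval k)
    (ha : ∀ r, Tendsto (a r) (Filter.comap (fun z : ℂ => ‖z‖) atTop) (nhds (α r)))
    (F : ℂ → ℂ)
    (hF : ∀ k : ℂ, F k = ∑ r, (k : ℂ) ^ ((ν r : ℂ)) * a r k *
      Complex.exp (Complex.I * k * σ r)) :
    ∃ Ω : Set ℂ, IsCompact Ω ∧ ∃ m : Fin n → ℝ, ∃ K : Fin n → ℝ,
      (∀ r, 0 < K r) ∧
      ∀ k : ℂ, F k = 0 → k ∉ Ω → ∃ r : Fin n,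
        |(-k.im + m r * Real.log ‖k‖)| ≤ K r := by
  classical
  have huniv : (univ : Finset (Fin (n + 1))).Nonempty := ⟨0, mem_univ 0⟩
  -- uniform bounds on the `a r` near infinity
  have hbnd : ∀ r, ∃ M : ℝ, ∀ k : ℂ, M ≤ ‖k‖ →
      dist (a r k) (α r) ≤ ‖α r‖ / 2 := by
    intro r
    have hε : 0 < ‖α r‖ / 2 := by
      have := norm_pos_iff.mpr (hα r); linarith
    have h2 := Metric.tendsto_nhds.mp (ha r) _ hε
    rw [eventually_comap] at h2
    obtain ⟨M, hM⟩ := eventually_atTop.mp h2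
    exact ⟨M, fun k hk => le_of_lt (hM _ hk k rfl)⟩
  choose Mf hMf using hbnd
  set R₀ : ℝ := univ.sup' huniv Mf with hR₀
  set minα : ℝ := univ.inf' huniv (fun r => ‖α r‖) with hminαdef
  set A : ℝ := univ.sup' huniv (fun r => ‖α r‖) with hAdef
  have hminα : 0 < minα := by
    rw [hminαdef, Finset.lt_inf'_iff]
    exact fun r _ => norm_pos_iff.mpr (hα r)
  have hαA : ∀ r, ‖α r‖ ≤ A := fun r => by
    rw [hAdef]; exact Finset.le_sup' (fun r => ‖α r‖) (mem_univ r)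
  have hαm : ∀ r, minα ≤ ‖α r‖ := fun r => by
    rw [hminαdef]; exact Finset.inf'_le (fun r => ‖α r‖) (mem_univ r)
  have hA0 : 0 < A := lt_of_lt_of_le hminα (le_trans (hαm 0) (hαA 0))
  -- minimal gap between the σ's
  set pairs : Finset (Fin (n + 1) × Fin (n + 1)) :=
    univ.filter (fun p => p.1 ≠ p.2) with hpairs
  have hpne : pairs.Nonempty := by
    refine ⟨((⟨0, Nat.succ_pos n⟩ : Fin (n + 1)), (⟨1, by omega⟩ : Fin (n + 1))), ?_⟩
    simp [hpairs, Fin.ext_iff]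
  set δ : ℝ := pairs.inf' hpne (fun p => |σ p.1 - σ p.2|) with hδdef
  have hδ0 : 0 < δ := by
    rw [hδdef, Finset.lt_inf'_iff]
    intro p hp
    rw [hpairs, mem_filter] at hp
    exact abs_pos.mpr (sub_ne_zero.mpr (fun h => hp.2 (hσ.injective h)))
  have hδle : ∀ p q : Fin (n + 1), p ≠ q → δ ≤ |σ p - σ q| := by
    intro p q hpq
    have hmem : (p, q) ∈ pairs := by
      rw [hpairs, Finset.mem_filter]; exact ⟨mem_univ _, hpq⟩
    rw [hδdef]
    exact Finset.inf'_le _ hmem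
  -- the breakpoint set
  set B : Finset ℝ := (Stmt15Aux.bkpt_finite σ ν hσ.injective).toFinset with hBdef
  have hBmem : ∀ b, Stmt15Aux.IsBkpt σ ν b → b ∈ B := by
    intro b hb; rw [hBdef, Set.Finite.mem_toFinset]; exact hb
  have hBcard : B.card ≤ n := Stmt15Aux.bset_card_le σ ν hσ
  -- the strip centers
  set m : Fin n → ℝ := fun j => B.toList.getD j 0 with hmdef
  have hmcover : ∀ b ∈ B, ∃ j : Fin n, m j = b := by
    intro b hb
    have hmem : b ∈ B.toList := Finset.mem_toList.mpr hb
    obtain ⟨i, hi, hgi⟩ := List.mem_iff_getElem.mp hmem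
    have hlen : B.toList.length = B.card := Finset.length_toList B
    refine ⟨⟨i, by omega⟩, ?_⟩
    rw [hmdef]
    simp only []
    rw [List.getD_eq_getElem _ _ (by simpa using hi)]
    exact hgi
  -- the strip half-width
  set Q : ℝ := 4 * (n + 1) * A / minα + 1 with hQdef
  have hQ1 : 1 < Q := by
    rw [hQdef]
    have : 0 < 4 * ((n : ℝ) + 1) * A / minα := by positivity
    linarith
  have hQ0 : 0 < Q := by linarith
  set K : ℝ := Real.log Q / δ with hKdef
  have hK0 : 0 < K := div_pos (Real.log_pos hQ1) hδ0
  have hexpK : Real.exp (δ * K) = Q := by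
    rw [hKdef, mul_div_cancel₀ _ (ne_of_gt hδ0)]
    exact Real.exp_log hQ0
  -- the compact set
  set R : ℝ := max R₀ 2 with hRdef
  refine ⟨Metric.closedBall (0 : ℂ) R, isCompact_closedBall _ _, m, fun _ => K,
    fun _ => hK0, ?_⟩
  intro k hFk hkΩ
  by_contra hcon
  push_neg at hcon
  -- basic facts about k
  have hk1 : R < ‖k‖ := by
    rw [Metric.mem_closedBall, not_le, Complex.dist_eq, sub_zero] at hkΩ
    exact hkΩ
  have hk2 : (2 : ℝ) < ‖k‖ := lt_of_le_of_lt (le_max_right _ _) hk1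
  have hkR₀ : R₀ ≤ ‖k‖ := le_of_lt (lt_of_le_of_lt (le_max_left _ _) hk1)
  have hkpos : 0 < ‖k‖ := by linarith
  have hk0 : k ≠ 0 := by
    intro h; rw [h] at hkpos; simp at hkpos
  set L : ℝ := Real.log (‖k‖) with hLdef
  have hL0 : 0 < L := Real.log_pos (by linarith)
  set t : ℝ := k.im / L with htdef
  -- transfer the strip conditions
  have hdist : ∀ b ∈ B, K / L ≤ |t - b| := by
    intro b hb
    obtain ⟨j, hj⟩ := hmcover b hb
    have hc := hcon j
    rw [hj] at hc
    have hrw : -k.im + b * L = L * (b - t) := by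
      rw [htdef]; field_simp; ring
    rw [hrw, abs_mul, abs_of_pos hL0] at hc
    rw [abs_sub_comm, div_le_iff₀ hL0]
    calc K ≤ L * |b - t| := le_of_lt hc
      _ = |b - t| * L := mul_comm _ _
  -- the maximizing index
  obtain ⟨rs, -, hrs⟩ := Finset.exists_max_image (univ : Finset (Fin (n + 1)))
    (fun r => Stmt15Aux.lin σ ν r t) huniv
  have hmax : ∀ q, Stmt15Aux.lin σ ν q t ≤ Stmt15Aux.lin σ ν rs t :=
    fun q => hrs q (mem_univ q)
  have hmarg : ∀ s : Fin (n + 1), s ≠ rs →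
      δ * K ≤ L * (Stmt15Aux.lin σ ν rs t - Stmt15Aux.lin σ ν s t) := by
    intro s hs
    have h1 := Stmt15Aux.margin σ ν hσ.injective hδ0 hδle hBmem hdist hmax hs
    have h2 : L * (δ * (K / L)) ≤ L * (Stmt15Aux.lin σ ν rs t - Stmt15Aux.lin σ ν s t) :=
      mul_le_mul_of_nonneg_left h1 (le_of_lt hL0)
    calc δ * K = L * (δ * (K / L)) := by field_simp
      _ ≤ _ := h2
  -- modulus of each term
  have habs : ∀ r : Fin (n + 1),
      ‖(k : ℂ) ^ ((ν r : ℂ)) * a r k * Complex.exp (Complex.I * k * σ r)‖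
        = Real.exp (L * Stmt15Aux.lin σ ν r t) * ‖a r k‖ := by
    intro r
    rw [norm_mul, norm_mul, Complex.norm_exp]
    have h1 : ‖(k : ℂ) ^ ((ν r : ℂ))‖ = Real.exp (ν r * L) := by
      rw [Complex.norm_cpow_of_ne_zero hk0]
      simp only [Complex.ofReal_re, Complex.ofReal_im, mul_zero, Real.exp_zero, div_one]
      rw [Real.rpow_def_of_pos hkpos, mul_comm]
    have h2 : (Complex.I * k * (σ r : ℂ)).re = -k.im * σ r := by
      simp [Complex.mul_re, Complex.mul_im]
    have h3 : L * Stmt15Aux.lin σ ν r t = ν r * L + -k.im * σ r := by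
      simp only [Stmt15Aux.lin, htdef]
      field_simp
      ring
    rw [h1, h2, h3, Real.exp_add]
    ring
  -- bounds on the a r k
  have hak : ∀ r, ‖a r k - α r‖ ≤ ‖α r‖ / 2 := by
    intro r
    have := hMf r k (le_trans (Finset.le_sup' Mf (mem_univ r)) hkR₀)
    rwa [Complex.dist_eq] at this
  have hupper : ∀ r, ‖a r k‖ ≤ 2 * A := by
    intro r
    have htri : ‖a r k‖ ≤ ‖a r k - α r‖ + ‖α r‖ := by
      calc ‖a r k‖ = ‖(a r k - α r) + α r‖ := by ring_nf
        _ ≤ _ := norm_add_le _ _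
    have := hak r
    have := hαA r
    linarith
  have hlower : minα / 2 ≤ ‖a rs k‖ := by
    have htri : ‖α rs‖ ≤ ‖α rs - a rs k‖ + ‖a rs k‖ := by
      calc ‖α rs‖ = ‖(α rs - a rs k) + a rs k‖ := by ring_nf
        _ ≤ _ := norm_add_le _ _
    have h4 : ‖α rs - a rs k‖ = ‖a rs k - α rs‖ := by
      rw [← norm_neg]; ring_nf
    have := hak rs
    have := hαm rs
    rw [h4] at htri
    linarith
  -- the sum vanishes
  set term : Fin (n + 1) → ℂ := fun r =>
    (k : ℂ) ^ ((ν r : ℂ)) * a r k * Complex.exp (Complex.I * k * σ r) with hterm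
  have hsum : ∑ r, term r = 0 := by rw [← hF k]; exact hFk
  have hsplit : term rs + ∑ s ∈ univ.erase rs, term s = 0 := by
    rw [Finset.add_sum_erase _ _ (mem_univ rs)]; exact hsum
  have hmain : ‖term rs‖ ≤ ∑ s ∈ univ.erase rs, ‖term s‖ := by
    have : term rs = -(∑ s ∈ univ.erase rs, term s) := by linear_combination hsplit
    rw [this, norm_neg]
    exact norm_sum_le _ _
  set G : ℝ := L * Stmt15Aux.lin σ ν rs t with hGdef
  have hbound : ∀ s ∈ univ.erase rs,
      ‖term s‖ ≤ Real.exp G * (2 * A) / Q := by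
    intro s hsmem
    have hsne : s ≠ rs := (Finset.mem_erase.mp hsmem).1
    have hm := hmarg s hsne
    have hle : L * Stmt15Aux.lin σ ν s t ≤ G - δ * K := by
      rw [hGdef]; nlinarith
    calc ‖term s‖
        = Real.exp (L * Stmt15Aux.lin σ ν s t) * ‖a s k‖ := habs s
      _ ≤ Real.exp (G - δ * K) * (2 * A) := by
          apply mul_le_mul (Real.exp_le_exp.mpr hle) (hupper s) (norm_nonneg _)
            (le_of_lt (Real.exp_pos _))
      _ = Real.exp G * (2 * A) / Q := by
          rw [Real.exp_sub, hexpK]; ring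
  have hsumbound : ∑ s ∈ univ.erase rs, ‖term s‖
      ≤ (n : ℝ) * (Real.exp G * (2 * A) / Q) := by
    calc ∑ s ∈ univ.erase rs, ‖term s‖
        ≤ ∑ _s ∈ univ.erase rs, Real.exp G * (2 * A) / Q := Finset.sum_le_sum hbound
      _ = (n : ℝ) * (Real.exp G * (2 * A) / Q) := by
          rw [Finset.sum_const, Finset.card_erase_of_mem (mem_univ rs), Finset.card_univ,
            Fintype.card_fin]
          simp [nsmul_eq_mul]
  have hlow : Real.exp G * (minα / 2) ≤ ‖term rs‖ := by
    rw [habs rs, ← hGdef]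
    exact mul_le_mul_of_nonneg_left hlower (le_of_lt (Real.exp_pos _))
  have hEpos := Real.exp_pos G
  have hfinal : minα / 2 ≤ (n : ℝ) * (2 * A) / Q := by
    have h5 : Real.exp G * (minα / 2) ≤ (n : ℝ) * (Real.exp G * (2 * A) / Q) :=
      le_trans hlow (le_trans hmain hsumbound)
    have h6 : (n : ℝ) * (Real.exp G * (2 * A) / Q) = Real.exp G * ((n : ℝ) * (2 * A) / Q) := by
      ring
    rw [h6] at h5
    exact le_of_mul_le_mul_left h5 hEpos
  have h7 : minα * Q ≤ 4 * (n : ℝ) * A := by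
    rw [div_le_div_iff₀ (by norm_num : (0:ℝ) < 2) hQ0] at hfinal
    nlinarith
  have h8 : minα * Q = 4 * ((n : ℝ) + 1) * A + minα := by
    rw [hQdef]
    field_simp
  nlinarith
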